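/- In the counterexample instance, although the demand D({2,3}) = 12 strictly exceeds the capacity P = 8, no cost-minimal feasible solution contains a robot spraying the full capacity 8 on edge {2,3}: there exists a feasible solution of cost 7, while every feasible solution in which some robot r has y_r({2,3}) = 8 has cost at least 9 > 7. (This is the paper's Theorem 2: the condition D_{ij} > P is not sufficient to guarantee an optimal solution with a robot r such that y^r_{ij} = P.) -/

import Mathlib

/-- The counterexample graph of the paper's Theorem 2: the 4-cycle `0-1-2-3-0` together
with the chord `{0,2}` (vertices `0,1,2,3` stand for the paper's vertices `1,2,3,4`;
the depot is vertex `0`; the missing edge `{1,3}` is the paper's `{2,4}`). -/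
def CG : SimpleGraph (Fin 4) where
  Adj a b := a ≠ b ∧ s(a, b) ≠ s(1, 3)
  symm := by
    constructor
    intro a b h
    exact ⟨h.1.symm, by rw [Sym2.eq_swap]; exact h.2⟩
  loopless := by
    constructor
    intro a h
    exact h.1 rfl

instance : DecidableRel CG.Adj := fun a b =>
  decidable_of_iff (a ≠ b ∧ s(a, b) ≠ s(1, 3)) Iff.rfl

/-- Demands: `12` on the edge `{1,2}` (the paper's `{2,3}`) and `1` on every other edge. -/
noncomputable def Dem : Sym2 (Fin 4) → ℝ := fun e => if e = s(1, 2) then 12 else 1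

/-- A feasible solution: a finite family of closed walks at the depot `0` together with
nonnegative sprays `y r e`, where `y r e > 0` only if robot `r`'s walk traverses `e`,
each robot sprays at most the capacity `8` in total, and the total spray on each edge
equals its demand. -/
def Feasible {R : ℕ} (walk : Fin R → CG.Walk 0 0)
    (y : Fin R → Sym2 (Fin 4) → ℝ) : Prop :=
  (∀ r e, 0 ≤ y r e) ∧
  (∀ r e, 0 < y r e → e ∈ (walk r).edges) ∧
  (∀ r, ∑ e ∈ CG.edgeFinset, y r e ≤ 8) ∧
  (∀ e ∈ CG.edgeSet, ∑ r, y r e = Dem e)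

open SimpleGraph

/-! ### Auxiliary lemmas on walk lengths -/

lemma support_card_le (w : CG.Walk 0 0) (S : Finset (Fin 4)) (hS : ∀ v ∈ S, v ∈ w.support)
    (h2 : 2 ≤ S.card) : S.card ≤ w.length := by
  cases w with
  | nil =>
      exfalso
      have : S ⊆ {0} := by
        intro v hv
        have := hS v hv
        simp [SimpleGraph.Walk.support_nil] at this
        simp [this]
      have := Finset.card_le_card this
      simp at this
      omega
  | cons h p =>
      have hsub : S ⊆ p.support.toFinset := by
        intro v hv
        have := hS v hv
        rw [SimpleGraph.Walk.support_cons] at this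
        rcases List.mem_cons.mp this with h0 | hm
        · subst h0
          exact List.mem_toFinset.mpr p.end_mem_support
        · exact List.mem_toFinset.mpr hm
      calc S.card ≤ p.support.toFinset.card := Finset.card_le_card hsub
        _ ≤ p.support.length := List.toFinset_card_le _
        _ = p.length + 1 := SimpleGraph.Walk.length_support p
        _ = (SimpleGraph.Walk.cons h p).length := rfl

lemma edge_mem_sup {a b : Fin 4} (w : CG.Walk 0 0) (h : s(a,b) ∈ w.edges) :
    a ∈ w.support ∧ b ∈ w.support :=
  ⟨w.fst_mem_support_of_mem_edges h, w.snd_mem_support_of_mem_edges h⟩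

lemma len3 (w : CG.Walk 0 0) (h : s(1,2) ∈ w.edges) : 3 ≤ w.length := by
  have hm := edge_mem_sup w h
  have := support_card_le w {0,1,2} (by
    intro v hv
    fin_cases hv
    · exact w.start_mem_support
    · exact hm.1
    · exact hm.2) (by decide)
  simpa using this

lemma len3' (w : CG.Walk 0 0) (h : s(2,3) ∈ w.edges) : 3 ≤ w.length := by
  have hm := edge_mem_sup w h
  have := support_card_le w {0,2,3} (by
    intro v hv
    fin_cases hv
    · exact w.start_mem_support
    · exact hm.1
    · exact hm.2) (by decide)
  simpa using this

lemma len4 (w : CG.Walk 0 0) (h : s(1,2) ∈ w.edges) (h' : s(2,3) ∈ w.edges) : 4 ≤ w.length := by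
  have hm := edge_mem_sup w h
  have hm' := edge_mem_sup w h'
  have := support_card_le w {0,1,2,3} (by
    intro v hv
    fin_cases hv
    · exact w.start_mem_support
    · exact hm.1
    · exact hm.2
    · exact hm'.2) (by decide)
  simpa using this

lemma len2 {a b : Fin 4} (w : CG.Walk 0 0) (hab : a ≠ b) (h : s(a,b) ∈ w.edges) :
    2 ≤ w.length := by
  have hm := edge_mem_sup w h
  have := support_card_le w {a,b} (by
    intro v hv
    rcases Finset.mem_insert.mp hv with rfl | hv
    · exact hm.1
    · rcases Finset.mem_singleton.mp hv with rfl
      exact hm.2) (by rw [Finset.card_insert_of_notMem (by simpa using hab), Finset.card_singleton])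
  rwa [Finset.card_insert_of_notMem (by simpa using hab), Finset.card_singleton] at this

lemma hfin : CG.edgeFinset = {s(0,1), s(0,2), s(0,3), s(1,2), s(2,3)} := by decide

lemma len6 (w : CG.Walk 0 0) (h1 : s(0,1) ∈ w.edges) (h2 : s(0,2) ∈ w.edges)
    (h3 : s(0,3) ∈ w.edges) (h4 : s(1,2) ∈ w.edges) (h5 : s(2,3) ∈ w.edges) :
    6 ≤ w.length := by
  by_contra hlt
  push_neg at hlt
  have hsub : ({s(0,1), s(0,2), s(0,3), s(1,2), s(2,3)} : Finset (Sym2 (Fin 4)))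
      ⊆ w.edges.toFinset := by
    intro e he
    fin_cases he <;> simpa
  have h5le : 5 ≤ w.edges.length := by
    calc (5:ℕ) = ({s(0,1), s(0,2), s(0,3), s(1,2), s(2,3)} : Finset (Sym2 (Fin 4))).card := by
          decide
      _ ≤ w.edges.toFinset.card := Finset.card_le_card hsub
      _ ≤ w.edges.length := List.toFinset_card_le _
  rw [w.length_edges] at h5le
  have hlen : w.length = 5 := by omega
  have hnodup : w.edges.Nodup := by
    have : w.edges.toFinset.card = w.edges.length := by
      have := List.toFinset_card_le w.edges
      have h5' : 5 ≤ w.edges.toFinset.card := by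
        calc (5:ℕ) = ({s(0,1), s(0,2), s(0,3), s(1,2), s(2,3)} : Finset (Sym2 (Fin 4))).card := by
              decide
          _ ≤ w.edges.toFinset.card := Finset.card_le_card hsub
      rw [w.length_edges, hlen] at *
      omega
    rw [List.card_toFinset] at this
    have hde : w.edges.dedup = w.edges := (List.dedup_sublist _).eq_of_length this
    exact List.dedup_eq_self.mp hde
  have heul : w.IsEulerian := by
    apply SimpleGraph.Walk.IsTrail.isEulerian_of_forall_mem ⟨hnodup⟩
    intro e he
    have : e ∈ CG.edgeFinset := SimpleGraph.mem_edgeFinset.mpr he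
    rw [hfin] at this
    fin_cases this <;> assumption
  have := heul.even_degree_iff (x := 0)
  simp at this
  have hdeg : CG.degree 0 = 3 := by decide
  rw [hdeg] at this
  exact (by decide : ¬ Even 3) this

/-! ### The cost-7 feasible solution -/

def wA : CG.Walk 0 0 :=
  .cons (by decide : CG.Adj 0 1) (.cons (by decide : CG.Adj 1 2)
    (.cons (by decide : CG.Adj 2 0) .nil))

def wB : CG.Walk 0 0 :=
  .cons (by decide : CG.Adj 0 3) (.cons (by decide : CG.Adj 3 2)
    (.cons (by decide : CG.Adj 2 1) (.cons (by decide : CG.Adj 1 0) .nil)))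

noncomputable def yA : Sym2 (Fin 4) → ℝ := fun e =>
  if e = s(0,1) then 1 else if e = s(0,2) then 1 else if e = s(1,2) then 6 else 0

noncomputable def yB : Sym2 (Fin 4) → ℝ := fun e =>
  if e = s(0,3) then 1 else if e = s(2,3) then 1 else if e = s(1,2) then 6 else 0

lemma yA01 : yA s(0,1) = 1 := by unfold yA; rw [if_pos rfl]
lemma yA02 : yA s(0,2) = 1 := by unfold yA; rw [if_neg (by decide), if_pos rfl]
lemma yA03 : yA s(0,3) = 0 := by
  unfold yA; rw [if_neg (by decide), if_neg (by decide), if_neg (by decide)]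
lemma yA12 : yA s(1,2) = 6 := by
  unfold yA; rw [if_neg (by decide), if_neg (by decide), if_pos rfl]
lemma yA23 : yA s(2,3) = 0 := by
  unfold yA; rw [if_neg (by decide), if_neg (by decide), if_neg (by decide)]
lemma yB01 : yB s(0,1) = 0 := by
  unfold yB; rw [if_neg (by decide), if_neg (by decide), if_neg (by decide)]
lemma yB02 : yB s(0,2) = 0 := by
  unfold yB; rw [if_neg (by decide), if_neg (by decide), if_neg (by decide)]
lemma yB03 : yB s(0,3) = 1 := by unfold yB; rw [if_pos rfl]
lemma yB12 : yB s(1,2) = 6 := by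
  unfold yB; rw [if_neg (by decide), if_neg (by decide), if_pos rfl]
lemma yB23 : yB s(2,3) = 1 := by unfold yB; rw [if_neg (by decide), if_pos rfl]

lemma Dem01 : Dem s(0,1) = 1 := by unfold Dem; rw [if_neg (by decide)]
lemma Dem02 : Dem s(0,2) = 1 := by unfold Dem; rw [if_neg (by decide)]
lemma Dem03 : Dem s(0,3) = 1 := by unfold Dem; rw [if_neg (by decide)]
lemma Dem12 : Dem s(1,2) = 12 := by unfold Dem; rw [if_pos rfl]
lemma Dem23 : Dem s(2,3) = 1 := by unfold Dem; rw [if_neg (by decide)]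

lemma exists_seven : ∃ (R : ℕ) (walk : Fin R → CG.Walk 0 0) (y : Fin R → Sym2 (Fin 4) → ℝ),
    Feasible walk y ∧ ∑ r, (walk r).length = 7 := by
  refine ⟨2, ![wA, wB], ![yA, yB], ⟨?_, ?_, ?_, ?_⟩, ?_⟩
  · intro r e
    fin_cases r
    · show 0 ≤ yA e
      unfold yA; split_ifs <;> norm_num
    · show 0 ≤ yB e
      unfold yB; split_ifs <;> norm_num
  · intro r e h
    fin_cases r
    · replace h : 0 < yA e := h
      show e ∈ wA.edges
      unfold yA at h
      split_ifs at h with h1 h2 h3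
      · subst h1; decide
      · subst h2; decide
      · subst h3; decide
      · norm_num at h
    · replace h : 0 < yB e := h
      show e ∈ wB.edges
      unfold yB at h
      split_ifs at h with h1 h2 h3
      · subst h1; decide
      · subst h2; decide
      · subst h3; decide
      · norm_num at h
  · intro r
    fin_cases r
    · show ∑ e ∈ CG.edgeFinset, yA e ≤ 8
      rw [hfin, Finset.sum_insert (by decide), Finset.sum_insert (by decide),
        Finset.sum_insert (by decide), Finset.sum_insert (by decide), Finset.sum_singleton,
        yA01, yA02, yA03, yA12, yA23]
      norm_num
    · show ∑ e ∈ CG.edgeFinset, yB e ≤ 8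
      rw [hfin, Finset.sum_insert (by decide), Finset.sum_insert (by decide),
        Finset.sum_insert (by decide), Finset.sum_insert (by decide), Finset.sum_singleton,
        yB01, yB02, yB03, yB12, yB23]
      norm_num
  · intro e he
    have hm : e ∈ CG.edgeFinset := SimpleGraph.mem_edgeFinset.mpr he
    rw [hfin] at hm
    rw [Fin.sum_univ_two]
    show (yA e + yB e) = Dem e
    fin_cases hm
    · rw [yA01, yB01, Dem01]; norm_num
    · rw [yA02, yB02, Dem02]; norm_num
    · rw [yA03, yB03, Dem03]; norm_num
    · rw [yA12, yB12, Dem12]; norm_num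
    · rw [yA23, yB23, Dem23]; norm_num
  · rw [Fin.sum_univ_two]
    rfl

/-! ### Sum helper lemmas -/

lemma sum2 {R : ℕ} (f : Fin R → ℕ) (i j : Fin R) (hij : i ≠ j) : f i + f j ≤ ∑ r, f r := by
  classical
  have : ({i, j} : Finset (Fin R)).sum f ≤ Finset.univ.sum f :=
    Finset.sum_le_sum_of_subset (Finset.subset_univ _)
  rwa [Finset.sum_insert (by simpa using hij), Finset.sum_singleton] at this

lemma sum3 {R : ℕ} (f : Fin R → ℕ) (i j k : Fin R) (hij : i ≠ j) (hik : i ≠ k) (hjk : j ≠ k) :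
    f i + f j + f k ≤ ∑ r, f r := by
  classical
  have : ({i, j, k} : Finset (Fin R)).sum f ≤ Finset.univ.sum f :=
    Finset.sum_le_sum_of_subset (Finset.subset_univ _)
  rwa [Finset.sum_insert (by simp [hij, hik]), Finset.sum_insert (by simpa using hjk),
    Finset.sum_singleton, ← add_assoc] at this

/-! ### The lower bound -/

lemma lower_bound : ∀ (R : ℕ) (walk : Fin R → CG.Walk 0 0) (y : Fin R → Sym2 (Fin 4) → ℝ),
    Feasible walk y → (∃ r, y r s(1, 2) = 8) → 9 ≤ ∑ r, (walk r).length := by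
  rintro R walk y ⟨hpos, hmem, hcap, hdem⟩ ⟨r, hr8⟩
  have h12mem : s((1:Fin 4),2) ∈ CG.edgeFinset := by rw [hfin]; decide
  -- robot r sprays nothing outside s(1,2)
  have herase : ∑ e ∈ CG.edgeFinset.erase s(1,2), y r e = 0 := by
    have h1 := hcap r
    rw [← Finset.add_sum_erase _ _ h12mem, hr8] at h1
    have h2 : (0:ℝ) ≤ ∑ e ∈ CG.edgeFinset.erase s(1,2), y r e :=
      Finset.sum_nonneg (fun e _ => hpos r e)
    linarith
  have hzero : ∀ e ∈ CG.edgeFinset, e ≠ s(1,2) → y r e = 0 := by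
    intro e hmem' hne
    exact (Finset.sum_eq_zero_iff_of_nonneg (fun e _ => hpos r e)).mp herase e
      (Finset.mem_erase.mpr ⟨hne, hmem'⟩)
  -- each edge other than s(1,2) is sprayed by some robot ≠ r
  have hex : ∀ e ∈ CG.edgeFinset, e ≠ s(1,2) → ∃ r', r' ≠ r ∧ 0 < y r' e := by
    intro e he hne
    have hsum : ∑ r', y r' e = 1 := by
      rw [hdem e (SimpleGraph.mem_edgeFinset.mp he)]
      unfold Dem; rw [if_neg hne]
    by_contra hcon
    push_neg at hcon
    have hle : ∑ r', y r' e ≤ 0 := by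
      apply Finset.sum_nonpos
      intro r' _
      by_cases h' : r' = r
      · subst h'; rw [hzero e he hne]
      · exact le_of_not_gt fun hlt => (not_lt.mpr (hcon r' h')) hlt
    linarith
  -- the edge s(1,2) is also sprayed by some robot ≠ r
  have hex12 : ∃ a, a ≠ r ∧ 0 < y a s(1,2) := by
    have hsum : ∑ r', y r' s(1,2) = 12 := by
      rw [hdem _ (SimpleGraph.mem_edgeFinset.mp h12mem)]; exact Dem12
    by_contra hcon
    push_neg at hcon
    have h1 : ∑ r' ∈ Finset.univ.erase r, y r' s(1,2) ≤ 0 := by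
      apply Finset.sum_nonpos
      intro r' hr'
      exact le_of_not_gt fun hlt => (not_lt.mpr (hcon r' (Finset.mem_erase.mp hr').1)) hlt
    have h2 : y r s(1,2) + ∑ x ∈ Finset.univ.erase r, y x s(1,2) = ∑ x, y x s(1,2) :=
      Finset.add_sum_erase Finset.univ (fun r' => y r' s(1,2)) (Finset.mem_univ r)
    linarith
  obtain ⟨a, har, ha⟩ := hex12
  have ha12 : s((1:Fin 4),2) ∈ (walk a).edges := hmem a _ ha
  have hr12 : s((1:Fin 4),2) ∈ (walk r).edges := hmem r _ (by rw [hr8]; norm_num)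
  have hlr : 3 ≤ (walk r).length := len3 _ hr12
  obtain ⟨b, hbr, hb⟩ := hex s(2,3) (by rw [hfin]; decide) (by decide)
  have hb23 : s((2:Fin 4),3) ∈ (walk b).edges := hmem b _ hb
  by_cases hab : a = b
  · -- one robot ≠ r traverses both s(1,2) and s(2,3)
    have hab23 : s((2:Fin 4),3) ∈ (walk a).edges := hab ▸ hb23
    have h4 : 4 ≤ (walk a).length := len4 _ ha12 hab23
    have key : ∀ (u v : Fin 4), u ≠ v → s(u,v) ∈ CG.edgeFinset → s(u,v) ≠ s(1,2) →
        s(u,v) ∉ (walk a).edges → 9 ≤ ∑ r, (walk r).length := by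
      intro u v huv hmemf hne hnot
      obtain ⟨c, hcr, hc⟩ := hex _ hmemf hne
      have hce : s(u,v) ∈ (walk c).edges := hmem c _ hc
      have hca : c ≠ a := fun h => hnot (h ▸ hce)
      have l2 := len2 (walk c) huv hce
      have := sum3 (fun r => (walk r).length) r a c (Ne.symm har) (Ne.symm hcr) (Ne.symm hca)
      omega
    by_cases h01 : s((0:Fin 4),1) ∈ (walk a).edges
    · by_cases h02 : s((0:Fin 4),2) ∈ (walk a).edges
      · by_cases h03 : s((0:Fin 4),3) ∈ (walk a).edges
        · have h6 : 6 ≤ (walk a).length := len6 _ h01 h02 h03 ha12 hab23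
          have := sum2 (fun r => (walk r).length) r a (Ne.symm har)
          omega
        · exact key 0 3 (by decide) (by rw [hfin]; decide) (by decide) h03
      · exact key 0 2 (by decide) (by rw [hfin]; decide) (by decide) h02
    · exact key 0 1 (by decide) (by rw [hfin]; decide) (by decide) h01
  · -- two distinct robots ≠ r
    have h3a : 3 ≤ (walk a).length := len3 _ ha12
    have h3b : 3 ≤ (walk b).length := len3' _ hb23
    have := sum3 (fun r => (walk r).length) r a b (Ne.symm har) (Ne.symm hbr) hab
    omega

/-- The paper's Theorem 2, instantiated on the counterexample: although the demand `12`
on the paper's edge `{2,3}` (here `{1,2}`) strictly exceeds the capacity `8`, there is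
a feasible solution of cost `7`, every feasible solution in which some robot sprays the
full capacity `8` on that edge has cost at least `9 > 7`, and consequently no
cost-minimal feasible solution contains a robot spraying the full capacity on that
edge. -/
theorem counterexample_no_optimal_full_capacity :
    Dem s(1, 2) > 8 ∧
    (∃ (R : ℕ) (walk : Fin R → CG.Walk 0 0) (y : Fin R → Sym2 (Fin 4) → ℝ),
      Feasible walk y ∧ ∑ r, (walk r).length = 7) ∧
    (∀ (R : ℕ) (walk : Fin R → CG.Walk 0 0) (y : Fin R → Sym2 (Fin 4) → ℝ),
      Feasible walk y → (∃ r, y r s(1, 2) = 8) → 9 ≤ ∑ r, (walk r).length) ∧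
    (∀ (R : ℕ) (walk : Fin R → CG.Walk 0 0) (y : Fin R → Sym2 (Fin 4) → ℝ),
      Feasible walk y →
      (∀ (R' : ℕ) (walk' : Fin R' → CG.Walk 0 0) (y' : Fin R' → Sym2 (Fin 4) → ℝ),
        Feasible walk' y' → ∑ r, (walk r).length ≤ ∑ r', (walk' r').length) →
      ∀ r, y r s(1, 2) ≠ 8) := by
  refine ⟨by rw [Dem12]; norm_num, exists_seven, lower_bound, ?_⟩
  intro R walk y hfeas hopt r hr8
  obtain ⟨R', w', y', hf', hc'⟩ := exists_seven
  have h1 := hopt R' w' y' hf'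
  rw [hc'] at h1
  have h2 := lower_bound R walk y hfeas ⟨r, hr8⟩
  have : (9:ℕ) ≤ 7 := le_trans h2 h1
  norm_num at this
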